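/- Let $T > 0$, $p \geq 1$, $\delta \in (0,1)$ and $R \geq \max(\sqrt{4p|\ln \delta|}, p e^{-1})$. Let $B^{\delta,R}$ be the truncated linear Wong–Zakai approximation of a standard Brownian motion $B$ with width $\delta$ and truncation parameter $R$. Then there exists a constant $C > 0$ (depending only on $T$ and $p$) such that for all $s, t \in [0,T]$, $\|B^{\delta,R}(t) - B^{\delta,R}(s)\|_{L^p(\Omega)} \leq C \max(|t-s|^{1/2}, \delta^{1/2})$. -/

import Mathlib

open MeasureTheory ProbabilityTheory

/-- Truncation of `B` at level `R √t`. -/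
noncomputable def truncBM {Ω : Type*} (B : ℝ → Ω → ℝ) (R t : ℝ) (ω : Ω) : ℝ :=
  max (-(R * Real.sqrt t)) (min (B t ω) (R * Real.sqrt t))

/-- `⌊t⌋_δ = δ ⌊t/δ⌋`. -/
noncomputable def floorD (δ t : ℝ) : ℝ := δ * ⌊t / δ⌋

/-- Truncated piecewise-linear Wong–Zakai interpolant of `B` with width `δ`
and truncation parameter `R`. -/
noncomputable def wzApprox {Ω : Type*} (B : ℝ → Ω → ℝ) (δ R t : ℝ) (ω : Ω) : ℝ :=
  truncBM B R (floorD δ t) ω +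
    (t - floorD δ t) / δ * (truncBM B R (floorD δ t + δ) ω - truncBM B R (floorD δ t) ω)

open Real
open scoped ENNReal NNReal

lemma lintegral_exp_gaussian (c : ℝ) :
    ∫⁻ x, ENNReal.ofReal (Real.exp (c * x)) ∂(gaussianReal 0 1)
      = ENNReal.ofReal (Real.exp (c^2/2)) := by
  rw [gaussianReal_of_var_ne_zero 0 one_ne_zero,
    lintegral_withDensity_eq_lintegral_mul _ (measurable_gaussianPDF 0 1)
      (by fun_prop)]
  have hpt : ∀ x : ℝ, (gaussianPDF 0 1 * fun x => ENNReal.ofReal (Real.exp (c * x))) x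
      = ENNReal.ofReal (Real.exp (c^2/2)) * gaussianPDF c 1 x := by
    intro x
    simp only [Pi.mul_apply, gaussianPDF, gaussianPDFReal]
    rw [← ENNReal.ofReal_mul (by positivity), ← ENNReal.ofReal_mul (by positivity)]
    congr 1
    rw [mul_assoc, ← Real.exp_add, mul_left_comm, ← Real.exp_add]
    congr 2
    push_cast
    ring
  simp_rw [hpt]
  rw [lintegral_const_mul _ (measurable_gaussianPDF c 1),
    lintegral_gaussianPDF_eq_one c one_ne_zero, mul_one]

lemma gaussian_onesided_tail (R : ℝ) (hR : 0 ≤ R) (c : ℝ) (hc : c = 1 ∨ c = -1) :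
    (gaussianReal 0 1) {x | R ≤ c * x} ≤ ENNReal.ofReal (Real.exp (-R^2/2)) := by
  have hmeas : MeasurableSet {x : ℝ | R ≤ c * x} :=
    measurableSet_le measurable_const (by fun_prop)
  have hind : ∀ x : ℝ, Set.indicator {x : ℝ | R ≤ c * x} (1 : ℝ → ℝ≥0∞) x
      ≤ ENNReal.ofReal (Real.exp (-R^2) * Real.exp (R * (c * x))) := by
    intro x
    by_cases hx : x ∈ {x : ℝ | R ≤ c * x}
    · rw [Set.indicator_of_mem hx]
      rw [← Real.exp_add]
      show (1:ℝ≥0∞) ≤ _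
      rw [show (1:ℝ≥0∞) = ENNReal.ofReal (Real.exp 0) by simp]
      apply ENNReal.ofReal_le_ofReal
      apply Real.exp_le_exp.2
      have : R ≤ c * x := hx
      rcases hc with h|h <;> nlinarith
    · rw [Set.indicator_of_notMem hx]; positivity
  calc (gaussianReal 0 1) {x | R ≤ c * x}
      = ∫⁻ x, Set.indicator {x : ℝ | R ≤ c * x} (1 : ℝ → ℝ≥0∞) x ∂(gaussianReal 0 1) := by
        exact (lintegral_indicator_one hmeas).symm
    _ ≤ ∫⁻ x, ENNReal.ofReal (Real.exp (-R^2) * Real.exp (R * (c * x))) ∂(gaussianReal 0 1) :=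
        lintegral_mono hind
    _ = ENNReal.ofReal (Real.exp (-R^2)) * ∫⁻ x, ENNReal.ofReal (Real.exp ((R * c) * x)) ∂(gaussianReal 0 1) := by
        simp_rw [ENNReal.ofReal_mul (Real.exp_nonneg _), mul_assoc]
        rw [lintegral_const_mul _ (by fun_prop)]
    _ = ENNReal.ofReal (Real.exp (-R^2) * Real.exp ((R*c)^2/2)) := by
        rw [lintegral_exp_gaussian, ← ENNReal.ofReal_mul (Real.exp_nonneg _)]
    _ ≤ ENNReal.ofReal (Real.exp (-R^2/2)) := by
        apply ENNReal.ofReal_le_ofReal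
        rw [← Real.exp_add]
        apply Real.exp_le_exp.2
        rcases hc with h | h <;> rw [h] <;> ring_nf <;> nlinarith

lemma gaussian_tail (R : ℝ) (hR : 0 ≤ R) :
    (gaussianReal 0 1) {x | R < |x|} ≤ ENNReal.ofReal (2 * Real.exp (-R^2/2)) := by
  have hsub : {x : ℝ | R < |x|} ⊆ {x : ℝ | R ≤ 1 * x} ∪ {x : ℝ | R ≤ (-1) * x} := by
    intro x hx
    simp only [Set.mem_setOf_eq, Set.mem_union, one_mul, neg_one_mul]
    have hx' : R < |x| := hx
    rcases le_or_gt 0 x with h | h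
    · left; rw [abs_of_nonneg h] at hx'; linarith
    · right; rw [abs_of_neg h] at hx'; linarith
  calc (gaussianReal 0 1) {x | R < |x|}
      ≤ (gaussianReal 0 1) ({x : ℝ | R ≤ 1 * x} ∪ {x : ℝ | R ≤ (-1) * x}) := measure_mono hsub
    _ ≤ (gaussianReal 0 1) {x : ℝ | R ≤ 1 * x} + (gaussianReal 0 1) {x : ℝ | R ≤ (-1) * x} :=
        measure_union_le _ _
    _ ≤ ENNReal.ofReal (Real.exp (-R^2/2)) + ENNReal.ofReal (Real.exp (-R^2/2)) := by
        gcongr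
        · exact gaussian_onesided_tail R hR 1 (Or.inl rfl)
        · exact gaussian_onesided_tail R hR (-1) (Or.inr rfl)
    _ = ENNReal.ofReal (2 * Real.exp (-R^2/2)) := by
        rw [← ENNReal.ofReal_add (Real.exp_nonneg _) (Real.exp_nonneg _)]; ring_nf

lemma rpow_abs_le (p x : ℝ) (hp : 0 ≤ p) :
    |x| ^ p ≤ 1 + (Real.exp (p * x) + Real.exp ((-p) * x)) := by
  rcases le_or_gt (|x|) 1 with h | h
  · have := Real.rpow_le_one (abs_nonneg x) h hp
    have h1 : 0 < Real.exp (p * x) := Real.exp_pos _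
    have h2 : 0 < Real.exp ((-p) * x) := Real.exp_pos _
    linarith
  · have hx0 : 0 < |x| := by linarith
    have : |x| ^ p = Real.exp (p * Real.log |x|) := by
      rw [Real.rpow_def_of_pos hx0, mul_comm]
    rw [this]
    have hlog : Real.log |x| ≤ |x| := (Real.log_le_sub_one_of_pos hx0).trans (by linarith)
    have h1 : p * Real.log |x| ≤ p * |x| := by
      apply mul_le_mul_of_nonneg_left hlog hp
    have h2 : Real.exp (p * |x|) ≤ Real.exp (p * x) + Real.exp ((-p) * x) := by
      rcases abs_cases x with ⟨he, _⟩ | ⟨he, _⟩ <;> rw [he]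
      · nlinarith [Real.exp_pos ((-p) * x), Real.exp_le_exp.2 (le_refl (p*x))]
      · have : p * -x = (-p) * x := by ring
        rw [this]
        nlinarith [Real.exp_pos (p * x)]
    have := (Real.exp_le_exp.2 h1).trans h2
    linarith
lemma gaussian_moment_lt_top (p : ℝ) (hp : 1 ≤ p) :
    eLpNorm (id : ℝ → ℝ) (ENNReal.ofReal p) (gaussianReal 0 1) < ⊤ := by
  have hp0 : 0 < p := by linarith
  have hq0 : ENNReal.ofReal p ≠ 0 := by simp [hp0.le, hp0]
  have hqt : ENNReal.ofReal p ≠ ⊤ := ENNReal.ofReal_ne_top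
  rw [eLpNorm_eq_lintegral_rpow_enorm_toReal hq0 hqt]
  rw [ENNReal.toReal_ofReal hp0.le]
  apply ENNReal.rpow_lt_top_of_nonneg (by positivity)
  intro htop
  have hbound : ∀ x : ℝ, ((‖(id : ℝ → ℝ) x‖₊ : ℝ≥0∞)) ^ p
      ≤ ENNReal.ofReal (1 + (Real.exp (p * x) + Real.exp ((-p) * x))) := by
    intro x
    simp only [id_eq]
    have : ((‖x‖₊ : ℝ≥0∞)) ^ p = ENNReal.ofReal (|x| ^ p) := by
      rw [← ENNReal.ofReal_rpow_of_nonneg (abs_nonneg x) hp0.le]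
      congr 1
      exact Real.enorm_eq_ofReal_abs x
    rw [this]
    exact ENNReal.ofReal_le_ofReal (rpow_abs_le p x hp0.le)
  have hfin : (∫⁻ x, ((‖(id : ℝ → ℝ) x‖₊ : ℝ≥0∞)) ^ p ∂(gaussianReal 0 1)) ≠ ⊤ := by
    apply ne_top_of_le_ne_top _ (lintegral_mono hbound)
    have heq : ∀ x : ℝ, ENNReal.ofReal (1 + (Real.exp (p * x) + Real.exp ((-p) * x)))
        = ENNReal.ofReal 1 + (ENNReal.ofReal (Real.exp (p * x)) + ENNReal.ofReal (Real.exp ((-p) * x))) := by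
      intro x
      rw [ENNReal.ofReal_add (by norm_num) (by positivity),
        ENNReal.ofReal_add (Real.exp_nonneg _) (Real.exp_nonneg _)]
    simp_rw [heq]
    rw [lintegral_add_left measurable_const, lintegral_add_left (by fun_prop)]
    rw [lintegral_exp_gaussian, lintegral_exp_gaussian, lintegral_const]
    simp [ENNReal.add_ne_top, measure_ne_top]
  exact hfin htop

-- 1-Lipschitz in x
lemma clamp_lip (A x y : ℝ) :
    |max (-A) (min x A) - max (-A) (min y A)| ≤ |x - y| := by
  rcases le_total x A with h1 | h1 <;> rcases le_total y A with h2 | h2 <;>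
    rcases le_total (-A) x with h3 | h3 <;> rcases le_total (-A) y with h4 | h4 <;>
    simp [max_def, min_def] <;> split_ifs <;>
    rw [abs_le] <;> constructor <;> rcases abs_cases (x - y) with ⟨he, hs⟩ | ⟨he, hs⟩ <;> linarith

-- level Lipschitz
lemma clamp_level (A A' x : ℝ) (h0 : 0 ≤ A') (h : A' ≤ A) :
    |max (-A) (min x A) - max (-A') (min x A')| ≤ A - A' := by
  rcases le_total x A with h1 | h1 <;> rcases le_total x A' with h2 | h2 <;>
    rcases le_total (-A) x with h3 | h3 <;> rcases le_total (-A') x with h4 | h4 <;>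
    simp [max_def, min_def] <;> split_ifs <;>
    rw [abs_le] <;> constructor <;> linarith

-- equality when inside
lemma clamp_eq_self (A x : ℝ) (h : |x| ≤ A) : max (-A) (min x A) = x := by
  rcases abs_le.1 h with ⟨h1, h2⟩
  rw [min_eq_left h2, max_eq_right h1]

lemma floorD_le {δ : ℝ} (hδ : 0 < δ) (t : ℝ) : floorD δ t ≤ t := by
  have := Int.floor_le (t / δ)
  calc floorD δ t = δ * ⌊t / δ⌋ := rfl
    _ ≤ δ * (t / δ) := by nlinarith
    _ = t := by field_simp

lemma lt_floorD_add {δ : ℝ} (hδ : 0 < δ) (t : ℝ) : t < floorD δ t + δ := by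
  have := Int.lt_floor_add_one (t / δ)
  have h2 : t / δ * δ < (⌊t / δ⌋ + 1) * δ := by nlinarith
  rw [div_mul_cancel₀ _ hδ.ne'] at h2
  calc t < (⌊t / δ⌋ + 1) * δ := h2
    _ = floorD δ t + δ := by rw [floorD]; ring

lemma floorD_nonneg {δ : ℝ} (hδ : 0 < δ) {t : ℝ} (ht : 0 ≤ t) : 0 ≤ floorD δ t := by
  have : (0:ℤ) ≤ ⌊t / δ⌋ := Int.floor_nonneg.2 (by positivity)
  have : (0:ℝ) ≤ ⌊t / δ⌋ := by exact_mod_cast this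
  exact mul_nonneg hδ.le this

lemma floorD_mono {δ : ℝ} (hδ : 0 < δ) {s t : ℝ} (hst : s ≤ t) : floorD δ s ≤ floorD δ t := by
  have h : ⌊s / δ⌋ ≤ ⌊t / δ⌋ := Int.floor_le_floor (by gcongr)
  have h' : (⌊s / δ⌋ : ℝ) ≤ ⌊t / δ⌋ := by exact_mod_cast h
  exact mul_le_mul_of_nonneg_left h' hδ.le

-- scaling of gaussian
lemma gaussianReal_eq_map {w : ℝ} (hw : 0 ≤ w) :
    gaussianReal 0 w.toNNReal
      = Measure.map (fun x => Real.sqrt w * x) (gaussianReal 0 1) := by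
  rw [show (fun x => Real.sqrt w * x) = (Real.sqrt w * ·) by rfl,
    gaussianReal_map_const_mul]
  congr 1
  · ring
  · ext
    simp [Real.sq_sqrt hw, hw]

lemma eLpNorm_scale (q : ℝ≥0∞) {w : ℝ} (hw : 0 ≤ w) :
    eLpNorm (id : ℝ → ℝ) q (gaussianReal 0 w.toNNReal)
      = ENNReal.ofReal (Real.sqrt w) * eLpNorm (id : ℝ → ℝ) q (gaussianReal 0 1) := by
  rw [gaussianReal_eq_map hw,
    eLpNorm_map_measure aestronglyMeasurable_id (by fun_prop)]
  have : (id : ℝ → ℝ) ∘ (fun x => Real.sqrt w * x) = (Real.sqrt w) • (id : ℝ → ℝ) := by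
    funext x; simp
  rw [this, eLpNorm_const_smul]
  congr 1
  rw [← Real.enorm_eq_ofReal (Real.sqrt_nonneg w)]

lemma pair_bound {Ω : Type*} [MeasurableSpace Ω] (P : Measure Ω) [IsProbabilityMeasure P]
    (B : ℝ → Ω → ℝ) (hBmeas : ∀ t, Measurable (B t))
    (hB0 : ∀ ω, B 0 ω = 0)
    (hBinc : ∀ s t : ℝ, 0 ≤ s → s ≤ t →
      Measure.map (fun ω => B t ω - B s ω) P = gaussianReal 0 (Real.toNNReal (t - s)))
    (p : ℝ) (hp : 1 ≤ p) (R : ℝ) (hRp : p * Real.exp (-1) ≤ R)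
    (a b : ℝ) (hb0 : 0 ≤ b) (hba : b ≤ a) :
    eLpNorm (fun ω => truncBM B R a ω - truncBM B R b ω) (ENNReal.ofReal p) P
      ≤ (eLpNorm (id : ℝ → ℝ) (ENNReal.ofReal p) (gaussianReal 0 1)
          + ENNReal.ofReal (4 * Real.exp 1)) * ENNReal.ofReal (Real.sqrt (a - b)) := by
  have hp0 : 0 < p := lt_of_lt_of_le one_pos hp
  have hR0 : 0 < R := lt_of_lt_of_le (by positivity) hRp
  have hq0 : ENNReal.ofReal p ≠ 0 := by simp [hp0]
  have hqt : ENNReal.ofReal p ≠ ⊤ := ENNReal.ofReal_ne_top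
  have hq1 : 1 ≤ ENNReal.ofReal p := by
    rw [← ENNReal.ofReal_one]; exact ENNReal.ofReal_le_ofReal hp
  have hsab : Real.sqrt b ≤ Real.sqrt a := Real.sqrt_le_sqrt hba
  have hcnn : 0 ≤ R * (Real.sqrt a - Real.sqrt b) := by nlinarith
  set S : Set Ω := {ω | R * Real.sqrt b < |B b ω|} with hS
  have hSmeas : MeasurableSet S := measurableSet_lt measurable_const (hBmeas b).abs
  -- pointwise bound
  have hpt : ∀ ω, ‖truncBM B R a ω - truncBM B R b ω‖
      ≤ ‖|B a ω - B b ω| + S.indicator (fun _ => R * (Real.sqrt a - Real.sqrt b)) ω‖ := by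
    intro ω
    have hindnn : 0 ≤ S.indicator (fun _ => R * (Real.sqrt a - Real.sqrt b)) ω :=
      Set.indicator_nonneg (fun _ _ => hcnn) ω
    rw [Real.norm_eq_abs, Real.norm_eq_abs, abs_of_nonneg (add_nonneg (abs_nonneg _) hindnn)]
    have h1 : |truncBM B R a ω - truncBM B R b ω|
        ≤ |B a ω - B b ω|
          + |max (-(R * Real.sqrt a)) (min (B b ω) (R * Real.sqrt a)) - truncBM B R b ω| := by
      have h2 := clamp_lip (R * Real.sqrt a) (B a ω) (B b ω)
      have h3 := abs_sub_le (truncBM B R a ω)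
        (max (-(R * Real.sqrt a)) (min (B b ω) (R * Real.sqrt a))) (truncBM B R b ω)
      unfold truncBM at *
      linarith
    have h4 : |max (-(R * Real.sqrt a)) (min (B b ω) (R * Real.sqrt a)) - truncBM B R b ω|
        ≤ S.indicator (fun _ => R * (Real.sqrt a - Real.sqrt b)) ω := by
      by_cases hω : ω ∈ S
      · rw [Set.indicator_of_mem hω]
        have := clamp_level (R * Real.sqrt a) (R * Real.sqrt b) (B b ω)
          (by positivity) (by nlinarith)
        unfold truncBM
        calc |_ - _| ≤ R * Real.sqrt a - R * Real.sqrt b := this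
          _ = R * (Real.sqrt a - Real.sqrt b) := by ring
      · rw [Set.indicator_of_notMem hω]
        have hle : |B b ω| ≤ R * Real.sqrt b := not_lt.1 hω
        have e1 : max (-(R * Real.sqrt a)) (min (B b ω) (R * Real.sqrt a)) = B b ω :=
          clamp_eq_self _ _ (le_trans hle (by nlinarith))
        have e2 : truncBM B R b ω = B b ω := clamp_eq_self _ _ hle
        rw [e1, e2, sub_self, abs_zero]
    linarith
  -- split
  have hmeas1 : AEStronglyMeasurable (fun ω => |B a ω - B b ω|) P :=
    (((hBmeas a).sub (hBmeas b)).abs).aestronglyMeasurable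
  have hmeas2 : AEStronglyMeasurable
      (S.indicator (fun _ => R * (Real.sqrt a - Real.sqrt b)) : Ω → ℝ) P :=
    ((measurable_const.indicator hSmeas)).aestronglyMeasurable
  have step1 : eLpNorm (fun ω => truncBM B R a ω - truncBM B R b ω) (ENNReal.ofReal p) P
      ≤ eLpNorm (fun ω => |B a ω - B b ω|) (ENNReal.ofReal p) P
        + eLpNorm (S.indicator (fun _ => R * (Real.sqrt a - Real.sqrt b))) (ENNReal.ofReal p) P := by
    refine le_trans (eLpNorm_mono hpt) ?_
    exact eLpNorm_add_le hmeas1 hmeas2 hq1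
  -- first term
  have habs : eLpNorm (fun ω => |B a ω - B b ω|) (ENNReal.ofReal p) P
      = eLpNorm (fun ω => B a ω - B b ω) (ENNReal.ofReal p) P := by
    rw [show (fun ω => |B a ω - B b ω|) = (fun ω => ‖B a ω - B b ω‖) by
      funext ω; rw [Real.norm_eq_abs]]
    exact eLpNorm_norm _
  have hterm1 : eLpNorm (fun ω => B a ω - B b ω) (ENNReal.ofReal p) P
      = ENNReal.ofReal (Real.sqrt (a - b))
        * eLpNorm (id : ℝ → ℝ) (ENNReal.ofReal p) (gaussianReal 0 1) := by
    have hmapB := hBinc b a hb0 hba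
    have h5 : eLpNorm (fun ω => B a ω - B b ω) (ENNReal.ofReal p) P
        = eLpNorm (id : ℝ → ℝ) (ENNReal.ofReal p) (gaussianReal 0 (a - b).toNNReal) := by
      rw [← hmapB,
        eLpNorm_map_measure (f := fun ω => B a ω - B b ω) aestronglyMeasurable_id
          (((hBmeas a).sub (hBmeas b)).aemeasurable)]
      rfl
    rw [h5, eLpNorm_scale _ (sub_nonneg.2 hba)]
  -- second term
  have htail : P S ≤ ENNReal.ofReal (2 * Real.exp (-R^2/2)) := by
    rcases eq_or_lt_of_le hb0 with hb | hb
    · have : S = ∅ := by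
        ext ω
        simp [hS, ← hb, hB0, Real.sqrt_zero]
      rw [this]
      simp
    · have hmapb : Measure.map (B b) P = gaussianReal 0 b.toNNReal := by
        have h6 := hBinc 0 b le_rfl hb0
        simpa [hB0] using h6
      have hset : MeasurableSet {x : ℝ | R * Real.sqrt b < |x|} :=
        measurableSet_lt measurable_const measurable_abs
      have h7 : P S = (gaussianReal 0 b.toNNReal) {x : ℝ | R * Real.sqrt b < |x|} := by
        rw [← hmapb, Measure.map_apply (hBmeas b) hset]
        rfl
      rw [h7, gaussianReal_eq_map hb0, Measure.map_apply (by fun_prop) hset]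
      have hpre : (fun x => Real.sqrt b * x) ⁻¹' {x : ℝ | R * Real.sqrt b < |x|}
          = {x : ℝ | R < |x|} := by
        ext x
        simp only [Set.mem_preimage, Set.mem_setOf_eq]
        rw [abs_mul, abs_of_nonneg (Real.sqrt_nonneg b), mul_comm R,
          mul_lt_mul_iff_right₀ (Real.sqrt_pos.2 hb)]
      rw [hpre]
      exact gaussian_tail R hR0.le
  have hterm2 : eLpNorm (S.indicator (fun _ => R * (Real.sqrt a - Real.sqrt b)))
        (ENNReal.ofReal p) P
      ≤ ENNReal.ofReal (4 * Real.exp 1 * Real.sqrt (a - b)) := by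
    rw [eLpNorm_indicator_const hSmeas hq0 hqt, ENNReal.toReal_ofReal hp0.le,
      Real.enorm_eq_ofReal hcnn]
    have hrp : (P S) ^ (1/p) ≤ ENNReal.ofReal (2 * Real.exp (-(R^2/(2*p)))) := by
      calc (P S) ^ (1/p) ≤ (ENNReal.ofReal (2 * Real.exp (-R^2/2))) ^ (1/p) :=
            ENNReal.rpow_le_rpow htail (by positivity)
        _ = ENNReal.ofReal ((2 * Real.exp (-R^2/2)) ^ (1/p)) :=
            ENNReal.ofReal_rpow_of_nonneg (by positivity) (by positivity)
        _ ≤ ENNReal.ofReal (2 * Real.exp (-(R^2/(2*p)))) := by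
            apply ENNReal.ofReal_le_ofReal
            rw [Real.mul_rpow (by norm_num) (Real.exp_nonneg _), ← Real.exp_mul]
            have h21 : (2:ℝ) ^ (1/p) ≤ 2 := by
              nth_rewrite 2 [show (2:ℝ) = 2 ^ (1:ℝ) by rw [Real.rpow_one]]
              apply Real.rpow_le_rpow_of_exponent_le one_le_two
              rw [div_le_one hp0]; exact hp
            have : -R^2/2 * (1/p) = -(R^2/(2*p)) := by field_simp
            rw [this]
            nlinarith [Real.exp_nonneg (-(R^2/(2*p)))]
    calc ENNReal.ofReal (R * (Real.sqrt a - Real.sqrt b)) * (P S) ^ (1/p)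
        ≤ ENNReal.ofReal (R * (Real.sqrt a - Real.sqrt b))
            * ENNReal.ofReal (2 * Real.exp (-(R^2/(2*p)))) := by gcongr
      _ = ENNReal.ofReal (R * (Real.sqrt a - Real.sqrt b) * (2 * Real.exp (-(R^2/(2*p))))) :=
          (ENNReal.ofReal_mul hcnn).symm
      _ ≤ ENNReal.ofReal (4 * Real.exp 1 * Real.sqrt (a - b)) := by
          apply ENNReal.ofReal_le_ofReal
          -- key real estimates
          have hsplit : Real.sqrt a - Real.sqrt b ≤ Real.sqrt (a - b) := by
            nlinarith [Real.sq_sqrt hb0, Real.sq_sqrt (le_trans hb0 hba),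
              Real.sq_sqrt (sub_nonneg.2 hba), Real.sqrt_nonneg a, Real.sqrt_nonneg b,
              Real.sqrt_nonneg (a - b)]
          have hRe : R * (2 * Real.exp (-(R^2/(2*p)))) ≤ 4 * Real.exp 1 := by
            have hx0 : 0 < R^2/(2*p) := by positivity
            have hxe : R^2/(2*p) ≤ Real.exp (R^2/(2*p)) := by
              linarith [Real.add_one_le_exp (R^2/(2*p))]
            have hstep : Real.exp (-(R^2/(2*p))) ≤ 2*p/R^2 := by
              rw [Real.exp_neg]
              rw [inv_le_comm₀ (Real.exp_pos _) (by positivity)]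
              calc (2*p/R^2)⁻¹ = R^2/(2*p) := by field_simp
                _ ≤ Real.exp (R^2/(2*p)) := hxe
            have hRe1 : p / Real.exp 1 ≤ R := by
              rw [Real.exp_neg, ← div_eq_mul_inv] at hRp; exact hRp
            have hR2 : p ≤ Real.exp 1 * R := by
              rw [div_le_iff₀ (Real.exp_pos 1)] at hRe1; linarith
            calc R * (2 * Real.exp (-(R^2/(2*p)))) ≤ R * (2 * (2*p/R^2)) := by
                  apply mul_le_mul_of_nonneg_left _ hR0.le
                  apply mul_le_mul_of_nonneg_left hstep (by norm_num)
              _ = 4*p/R := by field_simp; ring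
              _ ≤ 4 * Real.exp 1 := by
                  rw [div_le_iff₀ hR0]
                  nlinarith
          have hsnn : 0 ≤ Real.sqrt a - Real.sqrt b := by linarith
          calc R * (Real.sqrt a - Real.sqrt b) * (2 * Real.exp (-(R^2/(2*p))))
              = (R * (2 * Real.exp (-(R^2/(2*p))))) * (Real.sqrt a - Real.sqrt b) := by ring
            _ ≤ (4 * Real.exp 1) * Real.sqrt (a - b) := by
                apply mul_le_mul hRe hsplit hsnn (by positivity)
  -- combine
  calc eLpNorm (fun ω => truncBM B R a ω - truncBM B R b ω) (ENNReal.ofReal p) P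
      ≤ eLpNorm (fun ω => |B a ω - B b ω|) (ENNReal.ofReal p) P
        + eLpNorm (S.indicator (fun _ => R * (Real.sqrt a - Real.sqrt b))) (ENNReal.ofReal p) P :=
        step1
    _ ≤ ENNReal.ofReal (Real.sqrt (a - b))
          * eLpNorm (id : ℝ → ℝ) (ENNReal.ofReal p) (gaussianReal 0 1)
        + ENNReal.ofReal (4 * Real.exp 1 * Real.sqrt (a - b)) := by
        rw [habs, hterm1]; gcongr
    _ = (eLpNorm (id : ℝ → ℝ) (ENNReal.ofReal p) (gaussianReal 0 1)
          + ENNReal.ofReal (4 * Real.exp 1)) * ENNReal.ofReal (Real.sqrt (a - b)) := by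
        rw [ENNReal.ofReal_mul (by positivity), add_mul, mul_comm]

set_option maxHeartbeats 1000000 in
theorem wongZakai_truncated_Lp_holder
    {Ω : Type*} [MeasurableSpace Ω] (P : Measure Ω) [IsProbabilityMeasure P]
    (B : ℝ → Ω → ℝ) (hBmeas : ∀ t, Measurable (B t))
    (hB0 : ∀ ω, B 0 ω = 0)
    (hBinc : ∀ s t : ℝ, 0 ≤ s → s ≤ t →
      Measure.map (fun ω => B t ω - B s ω) P = gaussianReal 0 (Real.toNNReal (t - s)))
    (T p : ℝ) (hT : 0 < T) (hp : 1 ≤ p) :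
    ∃ C > 0, ∀ δ : ℝ, 0 < δ → δ < 1 →
      ∀ R : ℝ, max (Real.sqrt (4 * p * |Real.log δ|)) (p * Real.exp (-1)) ≤ R →
        ∀ s t : ℝ, 0 ≤ s → s ≤ T → 0 ≤ t → t ≤ T →
          eLpNorm (fun ω => wzApprox B δ R t ω - wzApprox B δ R s ω) (ENNReal.ofReal p) P
            ≤ ENNReal.ofReal (C * max (|t - s| ^ (1/2 : ℝ)) (δ ^ (1/2 : ℝ))) := by
  have hcEfin : eLpNorm (id : ℝ → ℝ) (ENNReal.ofReal p) (gaussianReal 0 1) ≠ ⊤ :=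
    (gaussian_moment_lt_top p hp).ne
  set cE : ℝ := (eLpNorm (id : ℝ → ℝ) (ENNReal.ofReal p) (gaussianReal 0 1)).toReal with hcE
  have hcE0 : 0 ≤ cE := ENNReal.toReal_nonneg
  refine ⟨(cE + 4 * Real.exp 1 + 1) * 4, by positivity, ?_⟩
  intro δ hδ0 hδ1 R hR
  have hRp : p * Real.exp (-1) ≤ R := le_trans (le_max_right _ _) hR
  have hp0 : 0 < p := lt_of_lt_of_le one_pos hp
  have hq1 : 1 ≤ ENNReal.ofReal p := by
    rw [← ENNReal.ofReal_one]; exact ENNReal.ofReal_le_ofReal hp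
  have htrm : ∀ a : ℝ, Measurable (fun ω => truncBM B R a ω) := fun a =>
    measurable_const.max ((hBmeas a).min measurable_const)
  have key : ∀ s t : ℝ, 0 ≤ s → 0 ≤ t → s ≤ t →
      eLpNorm (fun ω => wzApprox B δ R t ω - wzApprox B δ R s ω) (ENNReal.ofReal p) P
        ≤ ENNReal.ofReal ((cE + 4 * Real.exp 1 + 1) * 4
            * max (|t - s| ^ (1/2 : ℝ)) (δ ^ (1/2 : ℝ))) := by
    intro s t hs0 ht0 hst
    set u := floorD δ s with hu
    set v := floorD δ t with hv
    have hu0 : 0 ≤ u := floorD_nonneg hδ0 hs0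
    have hv0 : 0 ≤ v := floorD_nonneg hδ0 ht0
    have huv : u ≤ v := floorD_mono hδ0 hst
    have hus : u ≤ s := floorD_le hδ0 s
    have hsu : s < u + δ := lt_floorD_add hδ0 s
    have hvt : v ≤ t := floorD_le hδ0 t
    have htv : t < v + δ := lt_floorD_add hδ0 t
    -- pointwise bound
    have hpt : ∀ ω, ‖wzApprox B δ R t ω - wzApprox B δ R s ω‖
        ≤ ‖(fun ω => ‖truncBM B R v ω - truncBM B R u ω‖
            + ‖truncBM B R (v + δ) ω - truncBM B R v ω‖
            + ‖truncBM B R (u + δ) ω - truncBM B R u ω‖) ω‖ := by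
      intro ω
      simp only [Real.norm_eq_abs]
      refine le_trans ?_ (le_abs_self _)
      have hdecomp : wzApprox B δ R t ω - wzApprox B δ R s ω
          = (truncBM B R v ω - truncBM B R u ω)
            + (t - v)/δ * (truncBM B R (v + δ) ω - truncBM B R v ω)
            - (s - u)/δ * (truncBM B R (u + δ) ω - truncBM B R u ω) := by
        simp only [wzApprox, ← hu, ← hv]
        ring
      rw [hdecomp]
      have hθt0 : 0 ≤ (t - v)/δ := div_nonneg (by linarith) hδ0.le
      have hθt1 : (t - v)/δ ≤ 1 := by rw [div_le_one hδ0]; linarith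
      have hθs0 : 0 ≤ (s - u)/δ := div_nonneg (by linarith) hδ0.le
      have hθs1 : (s - u)/δ ≤ 1 := by rw [div_le_one hδ0]; linarith
      set A := truncBM B R v ω - truncBM B R u ω
      set X := truncBM B R (v + δ) ω - truncBM B R v ω
      set Y := truncBM B R (u + δ) ω - truncBM B R u ω
      have h1 : |A + (t - v)/δ * X - (s - u)/δ * Y|
          ≤ |A + (t - v)/δ * X| + |(s - u)/δ * Y| := abs_sub _ _
      have h2 : |A + (t - v)/δ * X| ≤ |A| + |(t - v)/δ * X| := abs_add_le _ _
      have h3 : |(t - v)/δ * X| ≤ |X| := by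
        rw [abs_mul, abs_of_nonneg hθt0]
        exact mul_le_of_le_one_left (abs_nonneg X) hθt1
      have h4 : |(s - u)/δ * Y| ≤ |Y| := by
        rw [abs_mul, abs_of_nonneg hθs0]
        exact mul_le_of_le_one_left (abs_nonneg Y) hθs1
      linarith
    -- triangle
    have hm1 := ((htrm v).sub (htrm u))
    have hm2 := ((htrm (v + δ)).sub (htrm v))
    have hm3 := ((htrm (u + δ)).sub (htrm u))
    have htri : eLpNorm (fun ω => wzApprox B δ R t ω - wzApprox B δ R s ω) (ENNReal.ofReal p) P
        ≤ eLpNorm (fun ω => truncBM B R v ω - truncBM B R u ω) (ENNReal.ofReal p) P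
          + eLpNorm (fun ω => truncBM B R (v + δ) ω - truncBM B R v ω) (ENNReal.ofReal p) P
          + eLpNorm (fun ω => truncBM B R (u + δ) ω - truncBM B R u ω) (ENNReal.ofReal p) P := by
      refine le_trans (eLpNorm_mono hpt) ?_
      calc eLpNorm (fun ω => ‖truncBM B R v ω - truncBM B R u ω‖
            + ‖truncBM B R (v + δ) ω - truncBM B R v ω‖
            + ‖truncBM B R (u + δ) ω - truncBM B R u ω‖) (ENNReal.ofReal p) P
          ≤ eLpNorm (fun ω => ‖truncBM B R v ω - truncBM B R u ω‖
              + ‖truncBM B R (v + δ) ω - truncBM B R v ω‖) (ENNReal.ofReal p) P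
            + eLpNorm (fun ω => ‖truncBM B R (u + δ) ω - truncBM B R u ω‖)
                (ENNReal.ofReal p) P :=
            eLpNorm_add_le ((hm1.norm.add hm2.norm).aestronglyMeasurable)
              (hm3.norm.aestronglyMeasurable) hq1
        _ ≤ (eLpNorm (fun ω => ‖truncBM B R v ω - truncBM B R u ω‖) (ENNReal.ofReal p) P
              + eLpNorm (fun ω => ‖truncBM B R (v + δ) ω - truncBM B R v ω‖)
                  (ENNReal.ofReal p) P)
            + eLpNorm (fun ω => ‖truncBM B R (u + δ) ω - truncBM B R u ω‖)
                (ENNReal.ofReal p) P := by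
            gcongr
            exact eLpNorm_add_le (hm1.norm.aestronglyMeasurable)
              (hm2.norm.aestronglyMeasurable) hq1
        _ = eLpNorm (fun ω => truncBM B R v ω - truncBM B R u ω) (ENNReal.ofReal p) P
            + eLpNorm (fun ω => truncBM B R (v + δ) ω - truncBM B R v ω) (ENNReal.ofReal p) P
            + eLpNorm (fun ω => truncBM B R (u + δ) ω - truncBM B R u ω) (ENNReal.ofReal p) P := by
            rw [eLpNorm_norm, eLpNorm_norm, eLpNorm_norm]
    -- apply pair bounds
    have hb1 := pair_bound P B hBmeas hB0 hBinc p hp R hRp v u hu0 huv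
    have hb2 := pair_bound P B hBmeas hB0 hBinc p hp R hRp (v + δ) v hv0 (by linarith)
    have hb3 := pair_bound P B hBmeas hB0 hBinc p hp R hRp (u + δ) u hu0 (by linarith)
    rw [add_sub_cancel_left] at hb2 hb3
    set cc : ℝ≥0∞ := eLpNorm (id : ℝ → ℝ) (ENNReal.ofReal p) (gaussianReal 0 1)
        + ENNReal.ofReal (4 * Real.exp 1) with hcc
    -- numeric side
    set M : ℝ := max (Real.sqrt (t - s)) (Real.sqrt δ) with hM
    have hM0 : 0 ≤ M := le_trans (Real.sqrt_nonneg _) (le_max_left _ _)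
    have hMts : t - s ≤ M ^ 2 := by
      have h := Real.sq_sqrt (sub_nonneg.2 hst)
      nlinarith [le_max_left (Real.sqrt (t - s)) (Real.sqrt δ), Real.sqrt_nonneg (t - s)]
    have hMδ : δ ≤ M ^ 2 := by
      have h := Real.sq_sqrt hδ0.le
      nlinarith [le_max_right (Real.sqrt (t - s)) (Real.sqrt δ), Real.sqrt_nonneg δ]
    have hvu2 : v - u ≤ 2 * M ^ 2 := by nlinarith
    have hsqrtvu : Real.sqrt (v - u) ≤ Real.sqrt 2 * M := by
      calc Real.sqrt (v - u) ≤ Real.sqrt (2 * M ^ 2) := Real.sqrt_le_sqrt hvu2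
        _ = Real.sqrt 2 * M := by
            rw [Real.sqrt_mul (by norm_num), Real.sqrt_sq hM0]
    have hsqδ : Real.sqrt δ ≤ M := le_max_right _ _
    have hsum : Real.sqrt (v - u) + Real.sqrt δ + Real.sqrt δ ≤ 4 * M := by
      have h2 : Real.sqrt 2 ≤ 2 := by
        nlinarith [Real.sq_sqrt (show (0:ℝ) ≤ 2 by norm_num), Real.sqrt_nonneg 2]
      nlinarith
    have hccle : cc ≤ ENNReal.ofReal (cE + 4 * Real.exp 1) := by
      rw [ENNReal.ofReal_add hcE0 (by positivity), hcE, ENNReal.ofReal_toReal hcEfin]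
    have hMeq : M = max (|t - s| ^ (1/2 : ℝ)) (δ ^ (1/2 : ℝ)) := by
      rw [hM, abs_of_nonneg (sub_nonneg.2 hst), Real.sqrt_eq_rpow, Real.sqrt_eq_rpow]
    calc eLpNorm (fun ω => wzApprox B δ R t ω - wzApprox B δ R s ω) (ENNReal.ofReal p) P
        ≤ cc * ENNReal.ofReal (Real.sqrt (v - u)) + cc * ENNReal.ofReal (Real.sqrt δ)
          + cc * ENNReal.ofReal (Real.sqrt δ) := by
          refine le_trans htri ?_
          exact add_le_add (add_le_add hb1 hb2) hb3
      _ = cc * ENNReal.ofReal (Real.sqrt (v - u) + Real.sqrt δ + Real.sqrt δ) := by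
          rw [ENNReal.ofReal_add (by positivity) (Real.sqrt_nonneg δ),
            ENNReal.ofReal_add (Real.sqrt_nonneg _) (Real.sqrt_nonneg δ), mul_add, mul_add]
      _ ≤ ENNReal.ofReal (cE + 4 * Real.exp 1) * ENNReal.ofReal (4 * M) :=
          mul_le_mul' hccle (ENNReal.ofReal_le_ofReal hsum)
      _ = ENNReal.ofReal ((cE + 4 * Real.exp 1) * (4 * M)) :=
          (ENNReal.ofReal_mul (add_nonneg hcE0 (by positivity))).symm
      _ ≤ ENNReal.ofReal ((cE + 4 * Real.exp 1 + 1) * 4 * M) := by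
          apply ENNReal.ofReal_le_ofReal
          nlinarith
      _ = ENNReal.ofReal ((cE + 4 * Real.exp 1 + 1) * 4
            * max (|t - s| ^ (1/2 : ℝ)) (δ ^ (1/2 : ℝ))) := by rw [← hMeq]
  intro s t hs0 hsT ht0 htT
  rcases le_total s t with hst | hst
  · exact key s t hs0 ht0 hst
  · have h := key t s ht0 hs0 hst
    rw [show (fun ω => wzApprox B δ R t ω - wzApprox B δ R s ω)
        = -(fun ω => wzApprox B δ R s ω - wzApprox B δ R t ω) by
      funext ω; simp only [Pi.neg_apply]; ring, eLpNorm_neg]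
    rwa [abs_sub_comm s t] at h
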